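/- Let A be a nonempty finite alphabet and let Z be a group code over A. Then Z is a rational maximal bifix code, its degree d(Z) is finite, and d(Z) equals the number of states of the minimal automaton of Z*. -/

import Mathlib

/-! Common definitions: words over a finite alphabet `A` are terms of `List A`,
concatenation being the monoid operation of the free monoid `A*`. -/

namespace PaperDefs

variable {A : Type*}

/-- `w` belongs to the Kleene star `X*` of `X`: it is a (possibly empty)
concatenation of elements of `X`. -/
def InStar (X : Set (List A)) (w : List A) : Prop :=
  ∃ l : List (List A), (∀ u ∈ l, u ∈ X) ∧ l.flatten = w

/-- The language `X*`. -/
def star (X : Set (List A)) : Set (List A) := {w | InStar X w}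

/-- A prefix code: a nonempty set of nonempty words, none of which is a proper
prefix of another. -/
def IsPrefixCode (X : Set (List A)) : Prop :=
  X.Nonempty ∧ (∀ w ∈ X, w ≠ []) ∧ ∀ u ∈ X, ∀ v ∈ X, u <+: v → u = v

/-- A suffix code. -/
def IsSuffixCode (X : Set (List A)) : Prop :=
  X.Nonempty ∧ (∀ w ∈ X, w ≠ []) ∧ ∀ u ∈ X, ∀ v ∈ X, u <:+ v → u = v

/-- A bifix code. -/
def IsBifixCode (X : Set (List A)) : Prop := IsPrefixCode X ∧ IsSuffixCode X

/-- A factorial set contains all factors of its elements. -/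
def Factorial (F : Set (List A)) : Prop := ∀ w ∈ F, ∀ u, u <:+: w → u ∈ F

/-- A recurrent set. -/
def Recurrent (F : Set (List A)) : Prop :=
  Factorial F ∧ F.Nonempty ∧ F ≠ {[]} ∧ ∀ u ∈ F, ∀ v ∈ F, ∃ w, u ++ w ++ v ∈ F

/-- A uniformly recurrent set. -/
def UniformlyRecurrent (F : Set (List A)) : Prop :=
  Recurrent F ∧ ∀ u ∈ F, ∃ n : ℕ, ∀ w ∈ F, n ≤ w.length → u <:+: w

/-- A parse of `w` with respect to `X` : a triple `(v, x, u)` with `w = v x u`,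
`v` has no suffix in `X`, `x ∈ X*`, and `u` has no prefix in `X`. -/
def IsParse (X : Set (List A)) (w : List A) (p : List A × List A × List A) : Prop :=
  p.1 ++ p.2.1 ++ p.2.2 = w ∧ (¬ ∃ s ∈ X, s <:+ p.1) ∧ InStar X p.2.1 ∧
    ¬ ∃ s ∈ X, s <+: p.2.2

/-- `δ_X(w)`, the number of parses of `w` with respect to `X`. -/
noncomputable def delta (X : Set (List A)) (w : List A) : ℕ :=
  {p | IsParse X w p}.ncard

/-- The `F`-degree `d_F(X)` of `X`, as an extended natural number. -/
noncomputable def Fdeg (X F : Set (List A)) : ℕ∞ :=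
  ⨆ w ∈ F, (delta X w : ℕ∞)

/-- The degree `d(X)` of `X`. -/
noncomputable def deg (X : Set (List A)) : ℕ∞ := Fdeg X Set.univ

/-- An `F`-maximal bifix code. -/
def IsFMaximalBifixCode (F X : Set (List A)) : Prop :=
  IsBifixCode X ∧ X ⊆ F ∧ ∀ Y : Set (List A), IsBifixCode Y → Y ⊆ F → X ⊆ Y → Y = X

/-- An `F`-maximal prefix code. -/
def IsFMaximalPrefixCode (F X : Set (List A)) : Prop :=
  IsPrefixCode X ∧ X ⊆ F ∧ ∀ Y : Set (List A), IsPrefixCode Y → Y ⊆ F → X ⊆ Y → Y = X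

/-- `X` is `F`-thin: some word of `F` is not a factor of any element of `X`. -/
def FThin (F X : Set (List A)) : Prop := ∃ w ∈ F, ∀ x ∈ X, ¬ w <:+: x

/-- A rational (regular) language. -/
def IsRational (L : Set (List A)) : Prop :=
  ∃ (σ : Type) (_ : Fintype σ) (M : DFA A σ), ∀ w : List A, w ∈ M.accepts ↔ w ∈ L

/-- The syntactic congruence of the language `L`. -/
def SynEquiv (L : Set (List A)) (u v : List A) : Prop :=
  ∀ x y : List A, x ++ u ++ y ∈ L ↔ x ++ v ++ y ∈ L

/-- `η : A* → M` is (a realization of) the syntactic homomorphism onto the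
syntactic monoid of `L`. -/
structure IsSyntacticHom (L : Set (List A)) {M : Type*} [Monoid M] (η : List A → M) : Prop where
  map_nil : η [] = 1
  map_append : ∀ u v : List A, η (u ++ v) = η u * η v
  surj : Function.Surjective η
  syn : ∀ u v : List A, η u = η v ↔ SynEquiv L u v

section Green

variable {M : Type*} [Monoid M]

/-- The `J`-order: `MuM ⊆ MvM`. -/
def JLe (u v : M) : Prop := ∃ x y, u = x * v * y

/-- Green's relation `J`. -/
def JEquiv (u v : M) : Prop := JLe u v ∧ JLe v u

/-- Green's relation `R`. -/
def REquiv (u v : M) : Prop := (∃ x, v = u * x) ∧ (∃ x, u = v * x)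

/-- Green's relation `L`. -/
def LEquiv (u v : M) : Prop := (∃ x, v = x * u) ∧ (∃ x, u = x * v)

/-- Green's relation `H`. -/
def HEquiv (u v : M) : Prop := REquiv u v ∧ LEquiv u v

/-- Green's relation `D`. -/
def DEquiv (u v : M) : Prop := ∃ s, REquiv u s ∧ LEquiv s v

/-- The `H`-class of an element. -/
def HClass (e : M) : Set M := {m | HEquiv m e}

/-- Membership in the minimum ideal (minimum `J`-class) of `M`. -/
def InMinIdeal (m : M) : Prop := ∀ n : M, JLe m n

/-- `S` is a subgroup of the monoid `M`: a subsemigroup which is a group. -/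
def IsSubgroupIn (S : Set M) : Prop :=
  S.Nonempty ∧ (∀ x ∈ S, ∀ y ∈ S, x * y ∈ S) ∧
    ∃ e ∈ S, (∀ x ∈ S, e * x = x ∧ x * e = x) ∧ ∀ x ∈ S, ∃ y ∈ S, x * y = e ∧ y * x = e

/-- The subsets `S ⊆ M` and `T ⊆ N` (each closed under multiplication, e.g.
maximal subgroups) are isomorphic as groups: there is a multiplicative
bijection from `S` onto `T`. -/
def GroupIsoOn {N : Type*} [Monoid N] (S : Set M) (T : Set N) : Prop :=
  ∃ φ : M → N, Set.BijOn φ S T ∧ ∀ x ∈ S, ∀ y ∈ S, φ (x * y) = φ x * φ y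

end Green

/-- `m` belongs to `J_F(X)`, the minimum `J`-class of the syntactic monoid of
`X*` meeting the image of `F` under the syntactic homomorphism `η`. -/
def InFMinJ {M : Type*} [Monoid M] (η : List A → M) (F : Set (List A)) (m : M) : Prop :=
  (∃ w ∈ F, JEquiv m (η w)) ∧ ∀ w ∈ F, JLe m (η w)

/-- A group code: a prefix code `Z` defined by a transitive permutation
representation of `A*` on a finite set, `Z*` being the stabilizer of a point. -/
def IsGroupCode (Z : Set (List A)) : Prop :=
  IsPrefixCode Z ∧
  ∃ (Q : Type) (_ : Fintype Q) (q₀ : Q) (α : List A → Equiv.Perm Q),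
    α [] = 1 ∧ (∀ u v : List A, α (u ++ v) = α u * α v) ∧
    (∀ q q' : Q, ∃ w : List A, α w q = q') ∧
    (∀ w : List A, InStar Z w ↔ α w q₀ = q₀) ∧
    Z = {w : List A | α w q₀ = q₀ ∧ w ≠ [] ∧
          ¬ ∃ u v : List A, u ≠ [] ∧ v ≠ [] ∧ α u q₀ = q₀ ∧ α v q₀ = q₀ ∧ w = u ++ v}

/-- Vertices of the extension graph of `w` in `F`: the disjoint union of
`L(w)` and `R(w)`. -/
def ExtVertex (F : Set (List A)) (w : List A) : Sum A A → Prop :=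
  fun x => Sum.elim (fun a => a :: w ∈ F) (fun b => w ++ [b] ∈ F) x

/-- The edge relation of the extension graph of `w` in `F`. -/
def ExtRel (F : Set (List A)) (w : List A) : Sum A A → Sum A A → Prop :=
  fun x y =>
    match x, y with
    | Sum.inl a, Sum.inr b => a :: (w ++ [b]) ∈ F
    | _, _ => False

/-- The extension graph `G(w)` of `w` in `F`. -/
def extGraph (F : Set (List A)) (w : List A) :
    SimpleGraph {x : Sum A A // ExtVertex F w x} :=
  SimpleGraph.fromRel fun x y => ExtRel F w x.1 y.1

/-- `F` is connected: every extension graph of a word of `F` is connected. -/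
def ConnectedSet (F : Set (List A)) : Prop :=
  ∀ w ∈ F, (extGraph F w).Connected

/-- `F` is a tree set: every extension graph of a word of `F` is a tree. -/
def TreeSet (F : Set (List A)) : Prop :=
  ∀ w ∈ F, (extGraph F w).IsTree

/-- The alphabet of `F` is the whole of `A`. -/
def AlphabetIs (F : Set (List A)) : Prop := ∀ a : A, [a] ∈ F

/-- The left quotient `u⁻¹L`, i.e. the state reached from the initial state of
the minimal automaton of `L` by reading `u`. -/
def leftQuot (L : Set (List A)) (u : List A) : Set (List A) := {w | u ++ w ∈ L}

/-- The set of states of the minimal automaton of `L`: the nonempty left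
quotients of `L`. -/
def MinStates (L : Set (List A)) : Set (Set (List A)) :=
  {q | q.Nonempty ∧ ∃ u : List A, q = leftQuot L u}

/-- The (partial) transition of the minimal automaton: `q · v`; it is defined
when the resulting set is nonempty. -/
def stepW (q : Set (List A)) (v : List A) : Set (List A) := {w | v ++ w ∈ q}

/-- The rank of the word `v` in the minimal automaton of `L`: the number of
distinct states `q · v` with `q` a state such that `q · v` is defined. -/
noncomputable def wordRank (L : Set (List A)) (v : List A) : ℕ :=
  ((fun q => stepW q v) '' {q ∈ MinStates L | (stepW q v).Nonempty}).ncard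

/-- The set of first return words of `F` to `u`. -/
def ReturnWords (F : Set (List A)) (u : List A) : Set (List A) :=
  {v | v ≠ [] ∧ u ++ v ∈ F ∧ u <:+ u ++ v ∧
    ¬ ∃ x y : List A, x ≠ [] ∧ y ≠ [] ∧ u ++ v = x ++ u ++ y}

/-- A code: every word has at most one factorization into elements of `X`. -/
def IsCode (X : Set (List A)) : Prop :=
  ∀ l m : List (List A), (∀ u ∈ l, u ∈ X) → (∀ u ∈ m, u ∈ X) →
    l.flatten = m.flatten → l = m

/-- The set `I = Q_X · K` of images of states of the minimal automaton of `L`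
under (partial) transitions by words whose syntactic image lies in `K`. -/
def ImageSet (L : Set (List A)) {M : Type*} [Monoid M] (η : List A → M) (K : Set M) :
    Set (Set (List A)) :=
  {p | ∃ q ∈ MinStates L, ∃ v : List A, η v ∈ K ∧ (stepW q v).Nonempty ∧ p = stepW q v}

/-- A witness for "a finite monoid `M` together with a monoid homomorphism
`A* → M`". -/
structure FiniteMonoidHomWitness (A : Type*) where
  M : Type
  [fin : Fintype M]
  [mon : Monoid M]
  φ : List A → M
  map_nil : φ [] = 1
  map_append : ∀ u v : List A, φ (u ++ v) = φ u * φ v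

end PaperDefs

section Aux
open PaperDefs

variable {A Q : Type}

private lemma cancel_left {q₀ : Q} {α : List A → Equiv.Perm Q}
    (hm : ∀ u v : List A, α (u ++ v) = α u * α v) {u v : List A}
    (huv : α (u ++ v) q₀ = q₀) (hu : α u q₀ = q₀) : α v q₀ = q₀ := by
  rw [hm, Equiv.Perm.mul_apply] at huv
  exact (α u).injective (huv.trans hu.symm)

private lemma exists_Z_prefix {q₀ : Q} {α : List A → Equiv.Perm Q} {Z : Set (List A)}
    (hziff : ∀ w : List A, w ∈ Z ↔ w ≠ [] ∧ α w q₀ = q₀ ∧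
      ¬ ∃ u v : List A, w = u ++ v ∧ u ≠ [] ∧ v ≠ [] ∧ α u q₀ = q₀) :
    ∀ (n : ℕ) (p : List A), p.length ≤ n → p ≠ [] → α p q₀ = q₀ → ∃ z ∈ Z, z <+: p := by
  intro n
  induction n with
  | zero =>
    intro p hl hne _
    exact absurd (List.length_eq_zero_iff.mp (Nat.le_zero.mp hl)) hne
  | succ n ih =>
    intro p hl hne hst
    by_cases hp : p ∈ Z
    · exact ⟨p, hp, List.prefix_refl p⟩
    · rw [hziff] at hp
      push_neg at hp
      obtain ⟨u, v, rfl, hu, hv, hust⟩ := hp hne hst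
      rw [List.length_append] at hl
      have hv1 : 0 < v.length := List.length_pos_iff.mpr hv
      obtain ⟨z, hz, hzp⟩ := ih u (by omega) hu hust
      exact ⟨z, hz, hzp.trans ⟨v, rfl⟩⟩

private lemma exists_Z_suffix {q₀ : Q} {α : List A → Equiv.Perm Q} {Z : Set (List A)}
    (hm : ∀ u v : List A, α (u ++ v) = α u * α v)
    (hziff : ∀ w : List A, w ∈ Z ↔ w ≠ [] ∧ α w q₀ = q₀ ∧
      ¬ ∃ u v : List A, w = u ++ v ∧ u ≠ [] ∧ v ≠ [] ∧ α u q₀ = q₀) :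
    ∀ (n : ℕ) (p : List A), p.length ≤ n → p ≠ [] → α p q₀ = q₀ → ∃ z ∈ Z, z <:+ p := by
  intro n
  induction n with
  | zero =>
    intro p hl hne _
    exact absurd (List.length_eq_zero_iff.mp (Nat.le_zero.mp hl)) hne
  | succ n ih =>
    intro p hl hne hst
    by_cases hp : p ∈ Z
    · exact ⟨p, hp, List.suffix_refl p⟩
    · rw [hziff] at hp
      push_neg at hp
      obtain ⟨u, v, rfl, hu, hv, hust⟩ := hp hne hst
      rw [List.length_append] at hl
      have hu1 : 0 < u.length := List.length_pos_iff.mpr hu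
      have hvst : α v q₀ = q₀ := cancel_left hm hst hust
      obtain ⟨z, hz, hzs⟩ := ih v (by omega) hv hvst
      exact ⟨z, hz, hzs.trans ⟨u, rfl⟩⟩

private lemma greedy {Z : Set (List A)} (hnil : ∀ z ∈ Z, z ≠ []) :
    ∀ (n : ℕ) (w : List A), w.length ≤ n →
      ∃ (l : List (List A)) (u : List A), (∀ z ∈ l, z ∈ Z) ∧ l.flatten ++ u = w ∧
        ¬ ∃ s ∈ Z, s <+: u := by
  intro n
  induction n with
  | zero =>
    intro w hl
    refine ⟨[], w, by simp, by simp, ?_⟩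
    rintro ⟨s, hs, hsp⟩
    have hw : w = [] := List.length_eq_zero_iff.mp (Nat.le_zero.mp hl)
    subst hw
    exact hnil s hs (List.prefix_nil.mp hsp)
  | succ n ih =>
    intro w hl
    by_cases h : ∃ s ∈ Z, s <+: w
    · obtain ⟨z, hz, t, rfl⟩ := h
      have hz0 : 0 < z.length := List.length_pos_iff.mpr (hnil z hz)
      rw [List.length_append] at hl
      obtain ⟨l, u, h1, h2, h3⟩ := ih t (by omega)
      refine ⟨z :: l, u, ?_, ?_, h3⟩
      · intro z' hz'
        rcases List.mem_cons.mp hz' with rfl | hz'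
        · exact hz
        · exact h1 z' hz'
      · rw [List.flatten_cons, List.append_assoc, h2]
    · exact ⟨[], w, by simp, by simp, h⟩

private lemma unique_fact {Z : Set (List A)}
    (hpc : ∀ u ∈ Z, ∀ v ∈ Z, u <+: v → u = v) :
    ∀ (l l' : List (List A)) (u u' : List A), (∀ z ∈ l, z ∈ Z) → (∀ z ∈ l', z ∈ Z) →
      (¬ ∃ s ∈ Z, s <+: u) → (¬ ∃ s ∈ Z, s <+: u') →
      l.flatten ++ u = l'.flatten ++ u' → l.flatten = l'.flatten ∧ u = u' := by
  intro l
  induction l with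
  | nil =>
    intro l' u u' _ hl' hu hu' heq
    cases l' with
    | nil => exact ⟨rfl, by simpa using heq⟩
    | cons z' t' =>
      exfalso
      apply hu
      refine ⟨z', hl' z' (by simp), t'.flatten ++ u', ?_⟩
      have : u = z' ++ (t'.flatten ++ u') := by simpa [List.append_assoc] using heq
      exact this.symm
  | cons z t ih =>
    intro l' u u' hl hl' hu hu' heq
    cases l' with
    | nil =>
      exfalso
      apply hu'
      refine ⟨z, hl z (by simp), t.flatten ++ u, ?_⟩
      have : u' = z ++ (t.flatten ++ u) := by
        have h2 : z ++ (t.flatten ++ u) = u' := by simpa [List.append_assoc] using heq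
        exact h2.symm
      exact this.symm
    | cons z' t' =>
      have hz : z ∈ Z := hl z (by simp)
      have hz' : z' ∈ Z := hl' z' (by simp)
      have heq' : z ++ (t.flatten ++ u) = z' ++ (t'.flatten ++ u') := by
        simpa [List.append_assoc] using heq
      have hcomp : z <+: z' ∨ z' <+: z :=
        List.prefix_or_prefix_of_prefix ⟨t.flatten ++ u, heq'⟩ ⟨t'.flatten ++ u', rfl⟩
      have hzz : z = z' := hcomp.elim (fun h => hpc z hz z' hz' h)
        (fun h => (hpc z' hz' z hz h).symm)
      subst hzz
      have hrest := List.append_cancel_left heq'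
      obtain ⟨h1, h2⟩ := ih t' u u' (fun x hx => hl x (by simp [hx]))
        (fun x hx => hl' x (by simp [hx])) hu hu' hrest
      exact ⟨by simp [List.flatten_cons, h1], h2⟩

private lemma parse_injOn {q₀ : Q} {α : List A → Equiv.Perm Q} {Z : Set (List A)}
    (hm : ∀ u v : List A, α (u ++ v) = α u * α v)
    (hziff : ∀ w : List A, w ∈ Z ↔ w ≠ [] ∧ α w q₀ = q₀ ∧
      ¬ ∃ u v : List A, w = u ++ v ∧ u ≠ [] ∧ v ≠ [] ∧ α u q₀ = q₀)
    (hpc : ∀ u ∈ Z, ∀ v ∈ Z, u <+: v → u = v)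
    (w : List A) :
    Set.InjOn (fun p : List A × List A × List A => α p.1 q₀) {p | IsParse Z w p} := by
  have key : ∀ p p' : List A × List A × List A, IsParse Z w p → IsParse Z w p' →
      α p.1 q₀ = α p'.1 q₀ → p.1 <+: p'.1 → p.1 = p'.1 := by
    rintro p p' hp hp' hst ⟨t, ht⟩
    rcases eq_or_ne t [] with rfl | htne
    · simpa using ht
    · exfalso
      have htst : α t q₀ = q₀ := by
        have h : α (p.1 ++ t) q₀ = α p.1 q₀ := by rw [ht, ← hst]
        rw [hm, Equiv.Perm.mul_apply] at h
        exact (α p.1).injective h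
      obtain ⟨z, hz, hzs⟩ := exists_Z_suffix hm hziff t.length t le_rfl htne htst
      exact hp'.2.1 ⟨z, hz, hzs.trans ⟨p.1, ht⟩⟩
  intro p hp p' hp' hst
  have hp1 : IsParse Z w p := hp
  have hp1' : IsParse Z w p' := hp'
  have h1 : p.1 <+: w := ⟨p.2.1 ++ p.2.2, by rw [← List.append_assoc]; exact hp1.1⟩
  have h1' : p'.1 <+: w := ⟨p'.2.1 ++ p'.2.2, by rw [← List.append_assoc]; exact hp1'.1⟩
  have hv : p.1 = p'.1 := by
    rcases List.prefix_or_prefix_of_prefix h1 h1' with h | h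
    · exact key p p' hp1 hp1' hst h
    · exact (key p' p hp1' hp1 hst.symm h).symm
  have e1 : p.1 ++ (p.2.1 ++ p.2.2) = w := by rw [← List.append_assoc]; exact hp1.1
  have e2 : p'.1 ++ (p'.2.1 ++ p'.2.2) = w := by rw [← List.append_assoc]; exact hp1'.1
  rw [hv] at e1
  have hrest : p.2.1 ++ p.2.2 = p'.2.1 ++ p'.2.2 :=
    List.append_cancel_left (e1.trans e2.symm)
  obtain ⟨lp, hlp, hfp⟩ := hp1.2.2.1
  obtain ⟨lp', hlp', hfp'⟩ := hp1'.2.2.1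
  rw [← hfp, ← hfp'] at hrest
  obtain ⟨hx, hu⟩ := unique_fact hpc lp lp' p.2.2 p'.2.2 hlp hlp' hp1.2.2.2 hp1'.2.2.2 hrest
  rw [hfp, hfp'] at hx
  obtain ⟨a1, a2, a3⟩ := p
  obtain ⟨b1, b2, b3⟩ := p'
  simp only at hv hx hu
  simp [hv, hx, hu]

private lemma parse_of_good {Z : Set (List A)} (hnil : ∀ z ∈ Z, z ≠ [])
    (w v r : List A) (hw : v ++ r = w) (hgood : ¬ ∃ s ∈ Z, s <:+ v) :
    ∃ x u : List A, IsParse Z w (v, x, u) := by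
  obtain ⟨l, u, h1, h2, h3⟩ := greedy hnil r.length r le_rfl
  refine ⟨l.flatten, u, ?_, hgood, ⟨l, h1, rfl⟩, h3⟩
  show v ++ l.flatten ++ u = w
  rw [List.append_assoc, h2]
  exact hw

end Aux


open PaperDefs in
theorem stmt_17 {A : Type} [Fintype A] [Nonempty A]
    (Z : Set (List A)) (hZ : IsGroupCode Z) :
    IsRational Z ∧ IsFMaximalBifixCode Set.univ Z ∧
    ∃ d : ℕ, deg Z = (d : ℕ∞) ∧ (MinStates (star Z)).ncard = d := by
  classical
  obtain ⟨hpcZ, Q, fQ, q₀, α, h1, hm, htrans, hstar, hZdef⟩ := hZ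
  haveI := fQ
  haveI := Classical.decEq Q
  -- simplified membership criterion
  have hziff : ∀ w : List A, w ∈ Z ↔ w ≠ [] ∧ α w q₀ = q₀ ∧
      ¬ ∃ u v : List A, w = u ++ v ∧ u ≠ [] ∧ v ≠ [] ∧ α u q₀ = q₀ := by
    intro w
    rw [hZdef]
    simp only [Set.mem_setOf_eq]
    constructor
    · rintro ⟨hst, hne', hnex⟩
      refine ⟨hne', hst, ?_⟩
      rintro ⟨u, v, rfl, hu, hv, hust⟩
      exact hnex ⟨u, v, hu, hv, hust, cancel_left hm hst hust, rfl⟩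
    · rintro ⟨hne', hst, hnex⟩
      refine ⟨hst, hne', ?_⟩
      rintro ⟨u, v, hu, hv, hust, hvst, rfl⟩
      exact hnex ⟨u, v, rfl, hu, hv, hust⟩
  have hnil : ∀ z ∈ Z, z ≠ [] := fun z hz => ((hziff z).mp hz).1
  have hpc : ∀ u ∈ Z, ∀ v ∈ Z, u <+: v → u = v := hpcZ.2.2
  -- rationality
  have hrat : IsRational Z := by
    let Bad : List A → Prop := fun w =>
      ∃ u v : List A, w = u ++ v ∧ u ≠ [] ∧ v ≠ [] ∧ α u q₀ = q₀
    let M : DFA A (Equiv.Perm Q × Prop × Prop) :=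
      { step := fun s a => (s.1 * α [a], s.2.1 ∨ (¬ s.2.2 ∧ s.1 q₀ = q₀), False)
        start := (1, False, True)
        accept := {s | s.1 q₀ = q₀ ∧ ¬ s.2.1 ∧ ¬ s.2.2} }
    have hval : ∀ w : List A, M.evalFrom M.start w = (α w, Bad w, w = []) := by
      intro w
      induction w using List.reverseRecOn with
      | nil =>
        show (1, False, True) = ((α [] : Equiv.Perm Q), Bad [], (([] : List A) = []))
        refine Prod.ext ?_ (Prod.ext ?_ ?_)
        · exact h1.symm
        · apply propext
          constructor
          · exact False.elim
          · rintro ⟨u, v, huv, hu, hv, -⟩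
            exact hu (List.append_eq_nil_iff.mp huv.symm).1
        · apply propext; simp
      | append_singleton w a ih =>
        rw [DFA.evalFrom_append_singleton, ih]
        show ((α w) * α [a], Bad w ∨ (¬(w = []) ∧ α w q₀ = q₀), False)
            = (α (w ++ [a]), Bad (w ++ [a]), (w ++ [a] = []))
        refine Prod.ext ?_ (Prod.ext ?_ ?_)
        · exact (hm w [a]).symm
        · apply propext
          constructor
          · rintro (⟨u, v, huv, hu, hv, hust⟩ | ⟨hwne, hwst⟩)
            · exact ⟨u, v ++ [a], by rw [huv, List.append_assoc], hu, by simp, hust⟩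
            · exact ⟨w, [a], rfl, hwne, by simp, hwst⟩
          · rintro ⟨u, v, huv, hu, hv, hust⟩
            have hul : u.length ≤ w.length := by
              have hlen := congrArg List.length huv
              simp only [List.length_append, List.length_singleton] at hlen
              have := List.length_pos_iff.mpr hv
              omega
            have hup : u = w.take u.length := by
              have hpre : u <+: w ++ [a] := ⟨v, huv.symm⟩
              have h' := List.prefix_iff_eq_take.mp hpre
              rwa [List.take_append_of_le_length hul] at h'
            have huw : u <+: w := hup ▸ List.take_prefix _ _
            rcases eq_or_ne u w with rfl | hune
            · exact Or.inr ⟨hu, hust⟩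
            · left
              obtain ⟨t, htw⟩ := huw
              refine ⟨u, t, htw.symm, hu, ?_, hust⟩
              rintro rfl
              exact hune (by simpa using htw)
        · apply propext; simp
    refine ⟨Equiv.Perm Q × Prop × Prop, inferInstance, M, ?_⟩
    intro w
    rw [DFA.mem_accepts]
    show M.evalFrom M.start w ∈ M.accept ↔ _
    rw [hval w]
    show (α w q₀ = q₀ ∧ ¬ Bad w ∧ ¬ (w = [])) ↔ _
    rw [hziff w]
    constructor
    · rintro ⟨hst, hnbad, hne'⟩
      exact ⟨hne', hst, hnbad⟩
    · rintro ⟨hne', hst, hnex⟩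
      exact ⟨hst, hnex, hne'⟩
  -- suffix code
  have hsfx : IsSuffixCode Z := by
    refine ⟨hpcZ.1, hpcZ.2.1, ?_⟩
    rintro u hu v hv ⟨s, hs⟩
    rcases eq_or_ne s [] with rfl | hsne
    · simpa using hs
    · exfalso
      obtain ⟨hvne, hvst, hnex⟩ := (hziff v).mp hv
      obtain ⟨hune, hust, -⟩ := (hziff u).mp hu
      apply hnex
      refine ⟨s, u, hs.symm, hsne, hune, ?_⟩
      have hvst' := hvst
      rw [← hs, hm, Equiv.Perm.mul_apply, hust] at hvst'
      exact hvst'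
  -- maximality
  have hmax : ∀ Y : Set (List A), IsBifixCode Y → Y ⊆ Set.univ → Z ⊆ Y → Y = Z := by
    intro Y hY _ hZY
    apply Set.Subset.antisymm _ hZY
    intro y hy
    by_contra hyZ
    have hyne : y ≠ [] := hY.1.2.1 y hy
    by_cases hcase : ∃ p t : List A, y = p ++ t ∧ p ≠ [] ∧ α p q₀ = q₀
    · obtain ⟨p, t, rfl, hpne, hpst⟩ := hcase
      obtain ⟨z, hz, hzp⟩ := exists_Z_prefix hziff p.length p le_rfl hpne hpst
      have heq := hY.1.2.2 z (hZY hz) (p ++ t) hy (hzp.trans ⟨t, rfl⟩)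
      exact hyZ (heq ▸ hz)
    · push_neg at hcase
      obtain ⟨v, hv⟩ := htrans q₀ ((α y)⁻¹ q₀)
      have hyv : α (y ++ v) q₀ = q₀ := by
        rw [hm, Equiv.Perm.mul_apply, hv]
        exact Equiv.apply_symm_apply _ _
      obtain ⟨z, hz, hzp⟩ := exists_Z_prefix hziff (y ++ v).length (y ++ v) le_rfl
        (by simp [hyne]) hyv
      rcases List.prefix_or_prefix_of_prefix (⟨v, rfl⟩ : y <+: y ++ v) hzp with h | h
      · have heq := hY.1.2.2 y hy z (hZY hz) h
        exact hyZ (heq ▸ hz)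
      · obtain ⟨t, ht⟩ := h
        obtain ⟨hzne, hzst, -⟩ := (hziff z).mp hz
        exact hcase z t ht.symm hzne hzst
  -- upper bound on delta
  have hdle : ∀ w : List A, delta Z w ≤ Fintype.card Q := by
    intro w
    have h := Set.ncard_le_ncard_of_injOn (t := (Set.univ : Set Q))
      (fun p : List A × List A × List A => α p.1 q₀)
      (fun a _ => Set.mem_univ _) (parse_injOn hm hziff hpc w) Set.finite_univ
    simpa [delta, Set.ncard_univ, Nat.card_eq_fintype_card] using h
  -- a word achieving the bound
  have hcover : ∃ w : List A, ∀ q : Q, ∃ p, p <+: w ∧ α p q₀ = q := by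
    have hfin : ∀ s : Finset Q, ∃ w : List A, ∀ q ∈ s, ∃ p, p <+: w ∧ α p q₀ = q := by
      intro s
      induction s using Finset.induction_on with
      | empty => exact ⟨[], by simp⟩
      | @insert a s ha ih =>
        obtain ⟨w, hw⟩ := ih
        obtain ⟨v, hv⟩ := htrans q₀ ((α w)⁻¹ a)
        refine ⟨w ++ v, ?_⟩
        intro q hq
        rcases Finset.mem_insert.mp hq with rfl | hq
        · refine ⟨w ++ v, List.prefix_refl _, ?_⟩
          rw [hm, Equiv.Perm.mul_apply, hv]
          exact Equiv.apply_symm_apply _ _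
        · obtain ⟨p, hp1, hp2⟩ := hw q hq
          exact ⟨p, hp1.trans ⟨v, rfl⟩, hp2⟩
    obtain ⟨w, hw⟩ := hfin Finset.univ
    exact ⟨w, fun q => hw q (Finset.mem_univ q)⟩
  obtain ⟨w₀, hw₀⟩ := hcover
  have hdexact : delta Z w₀ = Fintype.card Q := by
    have hinj := parse_injOn hm hziff hpc w₀
    have himg : (fun p : List A × List A × List A => α p.1 q₀) '' {p | IsParse Z w₀ p}
        = Set.univ := by
      apply Set.eq_univ_of_forall
      intro q
      have hex : ∃ n, α (List.take n w₀) q₀ = q ∧ n ≤ w₀.length := by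
        obtain ⟨p, hp, hq⟩ := hw₀ q
        refine ⟨p.length, ?_, hp.length_le⟩
        rw [← List.prefix_iff_eq_take.mp hp]
        exact hq
      obtain ⟨hq0, hlen0⟩ := Nat.find_spec hex
      set n₀ := Nat.find hex with hn₀
      set v := List.take n₀ w₀ with hvdef
      have hvw : v <+: w₀ := List.take_prefix _ _
      have hvlen : v.length = n₀ := by
        rw [hvdef, List.length_take]
        omega
      have hgood : ¬ ∃ s ∈ Z, s <:+ v := by
        rintro ⟨z, hz, s, hs⟩
        have hzne := hnil z hz
        have hzst : α z q₀ = q₀ := ((hziff z).mp hz).2.1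
        have hsst : α s q₀ = q := by
          have hvq : α v q₀ = q := hq0
          rw [← hs, hm, Equiv.Perm.mul_apply, hzst] at hvq
          exact hvq
        have hslen : s.length < n₀ := by
          have hadd : s.length + z.length = n₀ := by
            rw [← hvlen, ← hs, List.length_append]
          have hz0 : 0 < z.length := List.length_pos_iff.mpr hzne
          omega
        have hsv : s <+: v := ⟨z, hs⟩
        have hsw : s <+: w₀ := hsv.trans hvw
        refine Nat.find_min hex hslen ⟨?_, ?_⟩
        · rw [← List.prefix_iff_eq_take.mp hsw]
          exact hsst
        · exact hsw.length_le
      obtain ⟨x, u, hparse⟩ := parse_of_good hnil w₀ v (List.drop n₀ w₀)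
        (List.take_append_drop n₀ w₀) hgood
      exact ⟨(v, x, u), hparse, hq0⟩
    have hcard := Set.ncard_image_of_injOn hinj
    rw [himg, Set.ncard_univ, Nat.card_eq_fintype_card] at hcard
    simpa [delta] using hcard.symm
  -- degree
  have hdeg : deg Z = (Fintype.card Q : ℕ∞) := by
    simp only [deg, Fdeg]
    apply le_antisymm
    · exact iSup₂_le fun w _ => by exact_mod_cast hdle w
    · have hle := le_iSup₂ (f := fun (w : List A) (_ : w ∈ Set.univ) => (delta Z w : ℕ∞))
        w₀ (Set.mem_univ w₀)
      rw [hdexact] at hle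
      exact hle
  -- minimal automaton states
  have hstarset : ∀ w : List A, w ∈ star Z ↔ α w q₀ = q₀ := fun w => hstar w
  have hquot : ∀ u : List A, leftQuot (star Z) u = {w : List A | α w q₀ = (α u)⁻¹ q₀} := by
    intro u
    ext w
    simp only [leftQuot, Set.mem_setOf_eq]
    rw [hstarset, hm, Equiv.Perm.mul_apply]
    exact (α u).apply_eq_iff_eq_symm_apply
  have hS : MinStates (star Z) = (fun q : Q => {w : List A | α w q₀ = q}) '' Set.univ := by
    ext s
    constructor
    · rintro ⟨hne', u, rfl⟩
      exact ⟨(α u)⁻¹ q₀, Set.mem_univ _, (hquot u).symm⟩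
    · rintro ⟨q, -, rfl⟩
      refine ⟨?_, ?_⟩
      · obtain ⟨x, hx⟩ := htrans q₀ q
        exact ⟨x, hx⟩
      · obtain ⟨u, hu⟩ := htrans q q₀
        refine ⟨u, ?_⟩
        rw [hquot u]
        have : (α u)⁻¹ q₀ = q := by
          rw [← hu]
          exact Equiv.symm_apply_apply _ _
        rw [this]
  have hSinj : Function.Injective (fun q : Q => {w : List A | α w q₀ = q}) := by
    intro q q' h
    simp only [Set.ext_iff, Set.mem_setOf_eq] at h
    obtain ⟨x, hx⟩ := htrans q₀ q
    exact hx.symm.trans ((h x).mp hx)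
  have hmin : (MinStates (star Z)).ncard = Fintype.card Q := by
    rw [hS, Set.ncard_image_of_injective _ hSinj, Set.ncard_univ, Nat.card_eq_fintype_card]
  exact ⟨hrat, ⟨⟨hpcZ, hsfx⟩, Set.subset_univ _, hmax⟩, Fintype.card Q, hdeg, hmin⟩
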